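/- For a (V,A)-tree T and a finite set S = {α1,...,αm} of adjunct trees that is adjoinable to T, the Parikh image of Adj⁺(T, S) is the linear set { Φ_A(T) + x1·Φ_A(α1) + ... + xm·Φ_A(αm) : xi ∈ ℕ, xi ≥ 1 for all i }. -/

import Mathlib

/-- Trees whose internal nodes are labeled by nonterminals in `V`
and whose leaves are labeled by elements of `L`. -/
inductive PTree (V L : Type) : Type
  | leaf : L → PTree V L
  | node : V → List (PTree V L) → PTree V L

namespace PTree

variable {V A L : Type}

/-- Leaf alphabet for contexts/adjunct trees: a letter-or-ε leaf, or the hole. -/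
abbrev Aug (A : Type) := Option A ⊕ Unit

/-- The root label of a tree: a nonterminal or a leaf label. -/
def rootLabel : PTree V L → V ⊕ L
  | .leaf a => .inr a
  | .node X _ => .inl X

/-- Set of nonterminals occurring in a tree. -/
def ntSet : PTree V L → Set V
  | .leaf _ => ∅
  | .node X ts => insert X ((ts.attach.map (fun ⟨t, _⟩ => ntSet t)).foldr (· ∪ ·) ∅)

/-- A tree is simple if no nonterminal occurs twice on a root-to-leaf path. -/
def Simple : PTree V L → Prop
  | .leaf _ => True
  | .node X ts => ∀ t ∈ ts, X ∉ ntSet t ∧ Simple t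

/-- Number of holes in a context / adjunct tree. -/
def holes : PTree V (Aug A) → ℕ
  | .leaf (.inr _) => 1
  | .leaf (.inl _) => 0
  | .node _ ts => (ts.attach.map (fun ⟨t, _⟩ => holes t)).sum

/-- Substitute the tree `T` for every hole. -/
def subst (T : PTree V (Option A)) : PTree V (Aug A) → PTree V (Option A)
  | .leaf (.inl a) => .leaf a
  | .leaf (.inr _) => T
  | .node X ts => .node X (ts.attach.map (fun ⟨t, _⟩ => subst T t))

/-- Embed a `(V,A)`-tree into trees with holes (no holes created). -/
def toAug : PTree V (Option A) → PTree V (Aug A)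
  | .leaf a => .leaf (.inl a)
  | .node X ts => .node X (ts.attach.map (fun ⟨t, _⟩ => toAug t))

/-- Yield of a `(V,A)`-tree. -/
def yield : PTree V (Option A) → List A
  | .leaf none => []
  | .leaf (some a) => [a]
  | .node _ ts => (ts.attach.map (fun ⟨t, _⟩ => yield t)).flatten

/-- Yield of a context / adjunct tree, holes contributing `ε`. -/
def yieldA : PTree V (Aug A) → List A
  | .leaf (.inl none) => []
  | .leaf (.inl (some a)) => [a]
  | .leaf (.inr _) => []
  | .node _ ts => (ts.attach.map (fun ⟨t, _⟩ => yieldA t)).flatten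

/-- Height of a tree. -/
def height : PTree V L → ℕ
  | .leaf _ => 0
  | .node _ ts => (ts.attach.map (fun ⟨t, _⟩ => height t)).foldr max 0 + 1

/-- Size (number of nodes) of a tree. -/
def tsize : PTree V L → ℕ
  | .leaf _ => 1
  | .node _ ts => (ts.attach.map (fun ⟨t, _⟩ => tsize t)).sum + 1

end PTree

open PTree

/-- A context-free grammar over `A` with nonterminals `V`:
a finite set of rules `D ⊆ V × (V ∪ A ∪ {ε})⁺` and a start symbol. -/
structure CFG (V A : Type) where
  rules : Set (V × List (V ⊕ Option A))
  rules_fin : rules.Finite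
  start : V

variable {V A : Type}

/-- A tree is a valid derivation w.r.t. the rules `D`. -/
inductive IsDeriv (D : Set (V × List (V ⊕ Option A))) : PTree V (Option A) → Prop
  | leaf (a : Option A) : IsDeriv D (.leaf a)
  | node (X : V) (ts : List (PTree V (Option A))) :
      (X, ts.map rootLabel) ∈ D → (∀ t ∈ ts, IsDeriv D t) → IsDeriv D (.node X ts)

/-- The set `Trees(G)` of derivation trees of `G`. -/
def TreesSet (G : CFG V A) : Set (PTree V (Option A)) :=
  {T | T.rootLabel = .inl G.start ∧ IsDeriv G.rules T}

/-- The language of `G`: yields of derivation trees. -/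
def lang (G : CFG V A) : Set (List A) := PTree.yield '' TreesSet G

/-- An adjunct tree is represented by its root nonterminal `X` together with a tree
over `V, A ∪ {X}` (the distinguished leaf `X` being the hole). -/
abbrev AdjT (V A : Type) := V × PTree V (Aug A)

/-- Wellformedness of an adjunct tree: root node labeled `X`, exactly one `X`-leaf. -/
def WFAdjunct (p : AdjT V A) : Prop :=
  (∃ ts, p.2 = PTree.node p.1 ts) ∧ p.2.holes = 1

/-- A simple adjunct tree: no nonterminal repeats on paths from a child of the root. -/
def SimpleAdjunct (p : AdjT V A) : Prop :=
  ∃ ts, p.2 = PTree.node p.1 ts ∧ ∀ t ∈ ts, Simple t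

/-- Root label of a subtree of an adjunct tree with root nonterminal `X`:
the hole leaf is labeled `X`. -/
def augRoot (X : V) : PTree V (Aug A) → V ⊕ Option A
  | .leaf (.inl a) => .inr a
  | .leaf (.inr _) => .inl X
  | .node Y _ => .inl Y

/-- An adjunct tree is extracted from derivation trees of `D`: every internal
node respects the rules. -/
inductive IsDerivA (D : Set (V × List (V ⊕ Option A))) (X : V) : PTree V (Aug A) → Prop
  | leaf (a : Aug A) : IsDerivA D X (.leaf a)
  | node (Y : V) (ts : List (PTree V (Aug A))) :
      (Y, ts.map (augRoot X)) ∈ D → (∀ t ∈ ts, IsDerivA D X t) → IsDerivA D X (.node Y ts)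

/-- `T ⊢_α T'` : `T'` is obtained from `T` by adjoining the adjunct tree `α`
at some occurrence of its root nonterminal. -/
def Adjoins (α : AdjT V A) (T T' : PTree V (Option A)) : Prop :=
  WFAdjunct α ∧
  ∃ (C : PTree V (Aug A)) (ts : List (PTree V (Option A))),
    C.holes = 1 ∧
    subst (.node α.1 ts) C = T ∧
    subst (subst (.node α.1 ts) α.2) C = T'

/-- `AdjChain L T T'` : `T'` is obtained from `T` by successively adjoining
the adjunct trees listed in `L`. -/
def AdjChain : List (AdjT V A) → PTree V (Option A) → PTree V (Option A) → Prop
  | [], T, T' => T = T'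
  | α :: L, T, T' => ∃ T₁, Adjoins α T T₁ ∧ AdjChain L T₁ T'

/-- `Adj⁺(T,S)` : trees obtained from `T` using exactly the adjunct trees of `S`,
each at least once. -/
def AdjPlus (T : PTree V (Option A)) (S : Set (AdjT V A)) : Set (PTree V (Option A)) :=
  {T' | ∃ L : List (AdjT V A), AdjChain L T T' ∧ {α | α ∈ L} = S}

/-- `Adj(T,S)` : trees obtained from `T` using adjunct trees of `S`, arbitrarily often. -/
def AdjStar (T : PTree V (Option A)) (S : Set (AdjT V A)) : Set (PTree V (Option A)) :=
  {T' | ∃ L : List (AdjT V A), AdjChain L T T' ∧ {α | α ∈ L} ⊆ S}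

namespace PTree
variable [DecidableEq V]

mutual
/-- Find the leftmost `X`-rooted subtree: returns the surrounding context
(with a hole in its place) and the subtree. -/
def extract (X : V) : PTree V (Option A) → Option (PTree V (Aug A) × PTree V (Option A))
  | .leaf _ => none
  | .node Y ts =>
    if Y = X then some (.leaf (.inr ()), .node Y ts)
    else match extractL X ts with
      | none => none
      | some (Cs, sub) => some (.node Y Cs, sub)

/-- List version of `extract`. -/
def extractL (X : V) : List (PTree V (Option A)) → Option (List (PTree V (Aug A)) × PTree V (Option A))
  | [] => none
  | t :: ts =>
    match extract X t with
    | some (C, sub) => some (C :: ts.map toAug, sub)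
    | none =>
      match extractL X ts with
      | some (Cs, sub) => some (toAug t :: Cs, sub)
      | none => none
end

/-- Takahashi's decomposition of a tree into a simple tree and a set of
simple adjunct trees. -/
def decomp : PTree V (Option A) → PTree V (Option A) × Set (AdjT V A)
  | .leaf a => (.leaf a, ∅)
  | .node X ts =>
    let rs := ts.attach.map (fun ⟨t, _⟩ => decomp t)
    let S := (rs.map Prod.snd).foldr (· ∪ ·) ∅
    match extractL X (rs.map Prod.fst) with
    | none => (.node X (rs.map Prod.fst), S)
    | some (Cs, sub) => (sub, insert (X, PTree.node X Cs) S)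

end PTree

/-- The simple trees arising from decompositions of derivation trees. -/
def sTrees (G : CFG V A) [DecidableEq V] : Set (PTree V (Option A)) :=
  {T' | ∃ T ∈ TreesSet G, (decomp T).1 = T'}

/-- The simple adjunct trees arising from decompositions of derivation trees. -/
def sLoops (G : CFG V A) [DecidableEq V] : Set (AdjT V A) :=
  {α | ∃ T ∈ TreesSet G, α ∈ (decomp T).2}

/-- Parikh map. -/
def parikh [DecidableEq A] (w : List A) : A → ℕ := fun a => w.count a

/-- Linear subsets of `ℕ^A`. -/
def IsLinear (S : Set (A → ℕ)) : Prop :=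
  ∃ (v₀ : A → ℕ) (k : ℕ) (v : Fin k → A → ℕ),
    S = {u | ∃ x : Fin k → ℕ, u = v₀ + ∑ i, x i • v i}

/-- Semilinear subsets of `ℕ^A`: finite unions of linear sets. -/
def IsSemilinear (S : Set (A → ℕ)) : Prop :=
  ∃ (n : ℕ) (f : Fin n → Set (A → ℕ)), (∀ i, IsLinear (f i)) ∧ S = ⋃ i, f i
open PTree
namespace AdjAux
variable {V A L : Type}

theorem ptree_ind {P : PTree V L → Prop} (hl : ∀ a, P (.leaf a))
    (hn : ∀ X ts, (∀ t ∈ ts, P t) → P (.node X ts)) : ∀ t, P t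
  | .leaf a => hl a
  | .node X ts => hn X ts (fun t ht =>
      have : sizeOf t < sizeOf (PTree.node X ts) := by
        have := List.sizeOf_lt_of_mem ht
        simp only [PTree.node.sizeOf_spec]
        omega
      ptree_ind hl hn t)
termination_by t => sizeOf t

@[simp] theorem subst_node (T : PTree V (Option A)) (X : V) (ts : List (PTree V (Aug A))) :
    subst T (.node X ts) = .node X (ts.map (subst T)) := by
  simp [subst]

@[simp] theorem holes_node (X : V) (ts : List (PTree V (Aug A))) :
    holes (PTree.node X ts) = (ts.map holes).sum := by
  simp [holes]

@[simp] theorem yield_node (X : V) (ts : List (PTree V (Option A))) :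
    yield (PTree.node X ts) = (ts.map yield).flatten := by
  simp [yield]

@[simp] theorem yieldA_node (X : V) (ts : List (PTree V (Aug A))) :
    yieldA (PTree.node X ts) = (ts.map yieldA).flatten := by
  simp [yieldA]

@[simp] theorem toAug_node (X : V) (ts : List (PTree V (Option A))) :
    toAug (PTree.node X ts) = PTree.node X (ts.map toAug) := by
  simp [toAug]

theorem mem_foldr_union {x : V} : ∀ (ss : List (Set V)),
    (x ∈ ss.foldr (· ∪ ·) ∅ ↔ ∃ s ∈ ss, x ∈ s)
  | [] => by simp
  | s :: ss => by simp [mem_foldr_union ss]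

theorem mem_ntSet_node {x X : V} {ts : List (PTree V L)} :
    x ∈ ntSet (PTree.node X ts) ↔ x = X ∨ ∃ t ∈ ts, x ∈ ntSet t := by
  rw [ntSet]
  simp [mem_foldr_union]

@[simp] theorem ntSet_leaf (a : L) : ntSet (PTree.leaf a : PTree V L) = ∅ := by
  simp [ntSet]

theorem subst_toAug (S : PTree V (Option A)) : ∀ t, subst S (toAug t) = t := by
  refine ptree_ind (fun a => by simp [toAug, subst]) (fun X ts ih => ?_)
  simp only [toAug_node, subst_node, List.map_map, Function.comp]
  exact congrArg _ ((List.map_congr_left fun t ht => ih t ht).trans (List.map_id' ts))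

theorem holes_toAug : ∀ t : PTree V (Option A), holes (toAug t) = 0 := by
  refine ptree_ind (fun a => by simp [toAug, holes]) (fun X ts ih => ?_)
  simp only [toAug_node, holes_node, List.map_map]
  refine List.sum_eq_zero fun n hn => ?_
  obtain ⟨t, ht, rfl⟩ := List.mem_map.mp hn
  exact ih t ht


section parikh
variable [DecidableEq A]

@[simp] theorem parikh_nil : parikh ([] : List A) = 0 := by
  funext a; simp [parikh]

theorem parikh_append (l₁ l₂ : List A) : parikh (l₁ ++ l₂) = parikh l₁ + parikh l₂ := by
  funext a; simp [parikh, List.count_append]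

theorem parikh_flatten : ∀ ls : List (List A), parikh ls.flatten = (ls.map parikh).sum
  | [] => by simp
  | l :: ls => by
    simp only [List.flatten_cons, parikh_append, List.map_cons, List.sum_cons,
      parikh_flatten ls]

theorem sum_map_add {M : Type*} [AddCommMonoid M] (f g : α → M) :
    ∀ l : List α, (l.map (fun x => f x + g x)).sum = (l.map f).sum + (l.map g).sum
  | [] => by simp
  | a :: l => by
    simp only [List.map_cons, List.sum_cons, sum_map_add f g l]
    abel

theorem sum_map_smul {M : Type*} [AddCommMonoid M] (h : α → ℕ) (p : M) :
    ∀ l : List α, (l.map (fun x => h x • p)).sum = (l.map h).sum • p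
  | [] => by simp
  | a :: l => by
    simp only [List.map_cons, List.sum_cons, sum_map_smul h p l, add_smul]

theorem parikh_subst (S : PTree V (Option A)) :
    ∀ C : PTree V (Aug A),
      parikh (yield (subst S C)) = parikh (yieldA C) + holes C • parikh (yield S) := by
  refine ptree_ind (fun a => ?_) (fun X ts ih => ?_)
  · rcases a with (_ | a) | u
    · simp [subst, yield, yieldA, holes]
    · simp [subst, yield, yieldA, holes]
    · simp [subst, yieldA, holes]
  · simp only [subst_node, yield_node, yieldA_node, holes_node, parikh_flatten]
    rw [List.map_map, List.map_map, List.map_map, ← sum_map_smul holes (parikh (yield S)) ts,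
      ← sum_map_add]
    exact congrArg List.sum (List.map_congr_left fun t ht => by simpa using ih t ht)

end parikh

section ntset

theorem mem_ntSet_subst {S : PTree V (Option A)} {x : V} :
    ∀ C : PTree V (Aug A), x ∈ ntSet (subst S C) → x ∈ ntSet C ∨ x ∈ ntSet S := by
  refine ptree_ind (fun a => ?_) (fun X ts ih => ?_)
  · rcases a with a | u
    · simp [subst]
    · simp [subst]
  · intro h
    rw [subst_node, mem_ntSet_node] at h
    rcases h with rfl | ⟨t, ht, hx⟩
    · exact Or.inl (mem_ntSet_node.mpr (Or.inl rfl))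
    · obtain ⟨u, hu, rfl⟩ := List.mem_map.mp ht
      rcases ih u hu hx with h | h
      · exact Or.inl (mem_ntSet_node.mpr (Or.inr ⟨u, hu, h⟩))
      · exact Or.inr h

theorem ntSet_subset_subst {S : PTree V (Option A)} {x : V} :
    ∀ C : PTree V (Aug A), x ∈ ntSet C → x ∈ ntSet (subst S C) := by
  refine ptree_ind (fun a => by simp) (fun X ts ih => ?_)
  intro h
  rw [mem_ntSet_node] at h
  rw [subst_node, mem_ntSet_node]
  rcases h with rfl | ⟨t, ht, hx⟩
  · exact Or.inl rfl
  · exact Or.inr ⟨subst S t, List.mem_map.mpr ⟨t, ht, rfl⟩, ih t ht hx⟩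

theorem ntSet_subst_of_holes {S : PTree V (Option A)} {x : V} (hx : x ∈ ntSet S) :
    ∀ C : PTree V (Aug A), 1 ≤ holes C → x ∈ ntSet (subst S C) := by
  refine ptree_ind (fun a => ?_) (fun X ts ih => ?_)
  · rcases a with a | u
    · simp [holes]
    · intro _
      simpa [subst] using hx
  · intro h
    rw [holes_node] at h
    have : ∃ t ∈ ts, 1 ≤ holes t := by
      by_contra hc
      push_neg at hc
      have : (ts.map holes).sum = 0 := List.sum_eq_zero fun n hn => by
        obtain ⟨t, ht, rfl⟩ := List.mem_map.mp hn
        have := hc t ht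
        omega
      omega
    obtain ⟨t, ht, h1⟩ := this
    rw [subst_node, mem_ntSet_node]
    exact Or.inr ⟨subst S t, List.mem_map.mpr ⟨t, ht, rfl⟩, ih t ht h1⟩

theorem exists_ctx {x : V} :
    ∀ U : PTree V (Option A), x ∈ ntSet U →
      ∃ (C : PTree V (Aug A)) (ts : List (PTree V (Option A))),
        C.holes = 1 ∧ subst (.node x ts) C = U := by
  refine ptree_ind (fun a => by simp) (fun Y ts ih => ?_)
  intro h
  rw [mem_ntSet_node] at h
  by_cases hxY : x = Y
  · subst hxY
    exact ⟨.leaf (.inr ()), ts, by simp [PTree.holes], by simp [PTree.subst]⟩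
  · rcases h with rfl | ⟨t, ht, hx⟩
    · exact absurd rfl hxY
    obtain ⟨C', ts', hC1, hCs⟩ := ih t ht hx
    obtain ⟨l, r, rfl⟩ := List.append_of_mem ht
    refine ⟨.node Y (l.map toAug ++ C' :: r.map toAug), ts', ?_, ?_⟩
    · rw [holes_node]
      simp only [List.map_append, List.map_cons, List.map_map, List.sum_append,
        List.sum_cons, hC1]
      have hz : ∀ u : List (PTree V (Option A)), (u.map (holes ∘ toAug)).sum = 0 := by
        intro u
        refine List.sum_eq_zero fun n hn => ?_
        obtain ⟨t, _, rfl⟩ := List.mem_map.mp hn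
        simpa using holes_toAug t
      rw [hz, hz]
    · rw [subst_node]
      congr 1
      simp only [List.map_append, List.map_cons, List.map_map, hCs]
      congr 1
      · exact (List.map_congr_left fun u _ => by simpa using subst_toAug _ u).trans
          (List.map_id' l)
      · congr 1
        exact (List.map_congr_left fun u _ => by simpa using subst_toAug _ u).trans
          (List.map_id' r)

theorem ntSet_subst_eq {S : PTree V (Option A)} {C : PTree V (Aug A)} (h : C.holes = 1) :
    ntSet (subst S C) = ntSet C ∪ ntSet S := by
  ext x
  constructor
  · exact fun hx => mem_ntSet_subst C hx
  · rintro (hx | hx)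
    · exact ntSet_subset_subst C hx
    · exact ntSet_subst_of_holes hx C (by omega)

theorem adjoins_parikh [DecidableEq A] {β : AdjT V A} {U U' : PTree V (Option A)}
    (h : Adjoins β U U') :
    parikh (yield U') = parikh (yield U) + parikh (yieldA β.2) := by
  obtain ⟨⟨_, hh⟩, C, ts, hC1, hsub, hsub'⟩ := h
  rw [← hsub, ← hsub', parikh_subst, parikh_subst, parikh_subst, hC1, hh, one_smul,
    one_smul]
  abel

theorem adjoins_root {β : AdjT V A} {U U' : PTree V (Option A)} (h : Adjoins β U U') :
    β.1 ∈ ntSet U := by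
  obtain ⟨_, C, ts, hC1, hsub, _⟩ := h
  rw [← hsub]
  exact ntSet_subst_of_holes (mem_ntSet_node.mpr (Or.inl rfl)) C (by omega)

theorem adjoins_ntSet {β : AdjT V A} {U U' : PTree V (Option A)} (h : Adjoins β U U') :
    ntSet U' = ntSet U ∪ ntSet β.2 := by
  obtain ⟨⟨_, hh⟩, C, ts, hC1, hsub, hsub'⟩ := h
  rw [← hsub, ← hsub', ntSet_subst_eq hC1, ntSet_subst_eq hC1, ntSet_subst_eq hh]
  ext y
  simp only [Set.mem_union]
  tauto

theorem adjoins_exists {β : AdjT V A} {U : PTree V (Option A)} (hwf : WFAdjunct β)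
    (hmem : β.1 ∈ ntSet U) : ∃ U', Adjoins β U U' := by
  obtain ⟨C, ts, hC1, hsub⟩ := exists_ctx U hmem
  exact ⟨subst (subst (.node β.1 ts) β.2) C, hwf, C, ts, hC1, hsub, rfl⟩

def legal : List (AdjT V A) → Set V → Prop
  | [], _ => True
  | β :: L, s => β.1 ∈ s ∧ legal L (s ∪ ntSet β.2)

theorem legal_mono : ∀ (L : List (AdjT V A)) {s s' : Set V}, legal L s → s ⊆ s' → legal L s'
  | [], _, _, _, _ => trivial
  | β :: L, s, s', ⟨h1, h2⟩, hss =>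
    ⟨hss h1, legal_mono L h2 (Set.union_subset_union_left _ hss)⟩

theorem chain_parikh [DecidableEq A] :
    ∀ (L : List (AdjT V A)) (U U' : PTree V (Option A)), AdjChain L U U' →
      parikh (yield U') = parikh (yield U) + (L.map fun β => parikh (yieldA β.2)).sum
  | [], U, U', h => by
    cases h
    simp
  | β :: L, U, U', ⟨T₁, hadj, hchain⟩ => by
    rw [chain_parikh L T₁ U' hchain, adjoins_parikh hadj, List.map_cons, List.sum_cons]
    abel

theorem chain_legal :
    ∀ (L : List (AdjT V A)) (U U' : PTree V (Option A)), AdjChain L U U' →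
      (∀ β ∈ L, WFAdjunct β) ∧ legal L (ntSet U)
  | [], U, U', h => ⟨by simp, trivial⟩
  | β :: L, U, U', ⟨T₁, hadj, hchain⟩ => by
    obtain ⟨hwf, hleg⟩ := chain_legal L T₁ U' hchain
    refine ⟨?_, adjoins_root hadj, ?_⟩
    · intro γ hγ
      rcases List.mem_cons.mp hγ with rfl | hγ
      · exact hadj.1
      · exact hwf γ hγ
    · rwa [← adjoins_ntSet hadj]

theorem chain_exists :
    ∀ (L : List (AdjT V A)) (U : PTree V (Option A)), (∀ β ∈ L, WFAdjunct β) →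
      legal L (ntSet U) → ∃ U', AdjChain L U U'
  | [], U, _, _ => ⟨U, rfl⟩
  | β :: L, U, hwf, ⟨h1, h2⟩ => by
    obtain ⟨U₁, hadj⟩ := adjoins_exists (hwf β (List.mem_cons_self)) h1
    have h2' : legal L (ntSet U₁) := by rwa [adjoins_ntSet hadj]
    obtain ⟨U', hchain⟩ := chain_exists L U₁ (fun γ hγ => hwf γ (List.mem_cons_of_mem β hγ)) h2'
    exact ⟨U', U₁, hadj, hchain⟩

section dedup
variable [DecidableEq (AdjT V A)]

theorem legal_filter : ∀ (L : List (AdjT V A)) (s : Set V) (β : AdjT V A),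
    legal L s → ntSet β.2 ⊆ s → legal (L.filter (· ≠ β)) s
  | [], _, _, _, _ => trivial
  | γ :: L, s, β, ⟨h1, h2⟩, hsub => by
    by_cases hγβ : γ = β
    · subst hγβ
      have hs : s ∪ ntSet γ.2 = s := Set.union_eq_self_of_subset_right hsub
      rw [hs] at h2
      simpa [List.filter_cons] using legal_filter L s γ h2 hsub
    · have : (γ :: L).filter (· ≠ β) = γ :: L.filter (· ≠ β) := by
        simp [List.filter_cons, hγβ]
      rw [this]
      exact ⟨h1, legal_filter L _ β h2 (hsub.trans Set.subset_union_left)⟩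

def fdedup : List (AdjT V A) → List (AdjT V A)
  | [] => []
  | a :: l => a :: fdedup (l.filter (· ≠ a))
termination_by l => l.length
decreasing_by simpa using Nat.lt_succ_of_le ((List.length_filter_le _ _).trans (le_of_eq List.length_attach))

theorem mem_fdedup (x : AdjT V A) : ∀ l : List (AdjT V A), x ∈ fdedup l ↔ x ∈ l
  | [] => by simp [fdedup]
  | a :: l => by
    rw [fdedup]
    simp only [List.mem_cons, mem_fdedup x (l.filter (· ≠ a)), List.mem_filter]
    by_cases hxa : x = a <;> simp [hxa]
termination_by l => l.length
decreasing_by simpa using Nat.lt_succ_of_le (List.length_filter_le _ _)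

theorem nodup_fdedup : ∀ l : List (AdjT V A), (fdedup l).Nodup
  | [] => by simp [fdedup]
  | a :: l => by
    rw [fdedup]
    refine List.nodup_cons.mpr ⟨fun h => ?_, nodup_fdedup (l.filter (· ≠ a))⟩
    · have := (List.mem_filter.mp ((mem_fdedup a _).mp h)).2
      simp at this
termination_by l => l.length
decreasing_by simpa using Nat.lt_succ_of_le (List.length_filter_le _ _)

theorem legal_fdedup : ∀ (l : List (AdjT V A)) (s : Set V), legal l s → legal (fdedup l) s
  | [], _, _ => by rw [fdedup]; exact trivial
  | a :: l, s, ⟨h1, h2⟩ => by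
    rw [fdedup]
    exact ⟨h1, legal_fdedup (l.filter (· ≠ a)) _
      (legal_filter l _ a h2 Set.subset_union_right)⟩
termination_by l => l.length
decreasing_by simpa using Nat.lt_succ_of_le (List.length_filter_le _ _)

theorem legal_replicate_append :
    ∀ (n : ℕ) (γ : AdjT V A) (M : List (AdjT V A)) (s : Set V), γ.1 ∈ s →
      legal M (s ∪ ntSet γ.2) → 1 ≤ n → legal (List.replicate n γ ++ M) s
  | 0, _, _, _, _, _, h => by omega
  | 1, γ, M, s, h1, h2, _ => by
    rw [List.replicate_one]
    exact ⟨h1, h2⟩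
  | (n + 2), γ, M, s, h1, h2, _ => by
    rw [List.replicate_succ, List.cons_append]
    refine ⟨h1, legal_replicate_append (n + 1) γ M _ (Or.inl h1) ?_ (by omega)⟩
    refine legal_mono M h2 ?_
    rw [Set.union_assoc, Set.union_self]

theorem legal_flatMap (need : AdjT V A → ℕ) :
    ∀ (D : List (AdjT V A)) (s : Set V), legal D s → (∀ γ ∈ D, 1 ≤ need γ) →
      legal (D.flatMap (fun γ => List.replicate (need γ) γ)) s
  | [], _, _, _ => trivial
  | γ :: D, s, ⟨h1, h2⟩, hn => by
    rw [List.flatMap_cons]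
    exact legal_replicate_append _ γ _ s h1
      (legal_flatMap need D _ h2 fun δ hδ => hn δ (List.mem_cons_of_mem _ hδ))
      (hn γ (List.mem_cons_self))

theorem count_flatMap_of_not_mem (need : AdjT V A → ℕ) (β : AdjT V A) :
    ∀ D : List (AdjT V A), β ∉ D →
      (D.flatMap (fun γ => List.replicate (need γ) γ)).count β = 0
  | [], _ => by simp
  | γ :: D, hβ => by
    haveI : LawfulBEq (AdjT V A) := @instLawfulBEq _ ‹_›
    have h1 : β ∉ D := fun h => hβ (List.mem_cons_of_mem _ h)
    have h2 : γ ≠ β := fun h => hβ (h ▸ List.mem_cons_self)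
    simp [List.flatMap_cons, List.count_append, List.count_replicate,
      count_flatMap_of_not_mem need β D h1, h2]

theorem count_flatMap_of_mem (need : AdjT V A → ℕ) (β : AdjT V A) :
    ∀ D : List (AdjT V A), D.Nodup → β ∈ D →
      (D.flatMap (fun γ => List.replicate (need γ) γ)).count β = need β
  | [], _, h => by simp at h
  | γ :: D, hnd, hβ => by
    haveI : LawfulBEq (AdjT V A) := @instLawfulBEq _ ‹_›
    by_cases hβγ : β = γ
    · subst hβγ
      simp [List.flatMap_cons, List.count_append, List.count_replicate,
        count_flatMap_of_not_mem need β D (List.nodup_cons.mp hnd).1]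
    · rcases List.mem_cons.mp hβ with h | h
      · exact absurd h hβγ
      simp [List.flatMap_cons, List.count_append, List.count_replicate,
        count_flatMap_of_mem need β D (List.nodup_cons.mp hnd).2 h, Ne.symm hβγ]

theorem mem_flatMap_iff (need : AdjT V A → ℕ) (β : AdjT V A) (D : List (AdjT V A))
    (hn : ∀ γ ∈ D, 1 ≤ need γ) :
    β ∈ D.flatMap (fun γ => List.replicate (need γ) γ) ↔ β ∈ D := by
  rw [List.mem_flatMap]
  constructor
  · rintro ⟨γ, hγ, hβ⟩
    rw [List.eq_of_mem_replicate hβ]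
    exact hγ
  · intro hβ
    exact ⟨β, hβ, List.mem_replicate.mpr ⟨by have := hn β hβ; omega, rfl⟩⟩

theorem sum_map_count [DecidableEq A] {m : ℕ} (α : Fin m → AdjT V A)
    (hinj : Function.Injective α) (L : List (AdjT V A))
    (hset : {β | β ∈ L} = Set.range α) (f : AdjT V A → (A → ℕ)) :
    (L.map f).sum = ∑ i, (L.count (α i)) • f (α i) := by
  rw [Finset.sum_list_map_count]
  have hTF : L.toFinset = Finset.image α Finset.univ := by
    ext b
    simp only [List.mem_toFinset, Finset.mem_image, Finset.mem_univ, true_and]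
    constructor
    · intro hb
      have : b ∈ Set.range α := by rw [← hset]; exact hb
      obtain ⟨i, hi⟩ := this
      exact ⟨i, hi⟩
    · rintro ⟨i, rfl⟩
      have : α i ∈ Set.range α := Set.mem_range_self i
      rw [← hset] at this
      exact this
  rw [hTF, Finset.sum_image (fun i _ j _ h => hinj h)]

end dedup
end ntset
end AdjAux


/-- For `S = {α₁,…,α_m}` adjoinable to `T`, the Parikh image of
`Adj⁺(T,S)` is the linear set `{Φ(T) + Σ xᵢ·Φ(αᵢ) : xᵢ ≥ 1}`. -/
theorem parikh_adjplus {V A : Type} [DecidableEq A] (T : PTree V (Option A))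
    (m : ℕ) (α : Fin m → AdjT V A) (hinj : Function.Injective α)
    (hadj : (AdjPlus T (Set.range α)).Nonempty) :
    (fun T' => parikh (PTree.yield T')) '' AdjPlus T (Set.range α) =
      {v | ∃ x : Fin m → ℕ, (∀ i, 1 ≤ x i) ∧
        v = parikh T.yield + ∑ i, x i • parikh (PTree.yieldA (α i).2)} := by
  letI instD : DecidableEq (AdjT V A) := Classical.decEq _
  haveI : LawfulBEq (AdjT V A) := @instLawfulBEq _ instD
  ext v
  simp only [Set.mem_image, Set.mem_setOf_eq]
  constructor
  · rintro ⟨T', ⟨L, hchain, hset⟩, rfl⟩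
    refine ⟨fun i => L.count (α i), fun i => ?_, ?_⟩
    · have hmem : α i ∈ L := by
        have : α i ∈ {β | β ∈ L} := by rw [hset]; exact Set.mem_range_self i
        exact this
      exact List.count_pos_iff.mpr hmem
    · rw [AdjAux.chain_parikh L T _ hchain, AdjAux.sum_map_count α hinj L hset]
  · rintro ⟨x, hx, rfl⟩
    obtain ⟨T₀, L, hchain, hset⟩ := hadj
    obtain ⟨hWF, hlegal⟩ := AdjAux.chain_legal L T T₀ hchain
    set need : AdjT V A → ℕ := Function.extend α x (fun _ => 1) with hneed_def
    have hneed : ∀ i, need (α i) = x i := fun i => hinj.extend_apply x _ i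
    set D := AdjAux.fdedup L with hD
    have hmemD : ∀ β, β ∈ D ↔ β ∈ L := fun β => AdjAux.mem_fdedup β L
    have hneedD : ∀ γ ∈ D, 1 ≤ need γ := by
      intro γ hγ
      have hγr : γ ∈ Set.range α := by
        rw [← hset]
        exact (hmemD γ).mp hγ
      obtain ⟨i, rfl⟩ := hγr
      rw [hneed i]
      exact hx i
    set L' := D.flatMap (fun γ => List.replicate (need γ) γ) with hL'
    have hmemL' : ∀ β, β ∈ L' ↔ β ∈ L :=
      fun β => (AdjAux.mem_flatMap_iff need β D hneedD).trans (hmemD β)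
    have hsetL' : {β | β ∈ L'} = Set.range α := by
      rw [← hset]
      ext β
      exact hmemL' β
    have hlegal' : AdjAux.legal L' (PTree.ntSet T) :=
      AdjAux.legal_flatMap need D (PTree.ntSet T) (AdjAux.legal_fdedup L _ hlegal) hneedD
    have hwf' : ∀ β ∈ L', WFAdjunct β := fun β hβ => hWF β ((hmemL' β).mp hβ)
    obtain ⟨T', hchain'⟩ := AdjAux.chain_exists L' T hwf' hlegal'
    refine ⟨T', ⟨L', hchain', hsetL'⟩, ?_⟩
    rw [AdjAux.chain_parikh L' T T' hchain', AdjAux.sum_map_count α hinj L' hsetL']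
    congr 1
    refine Finset.sum_congr rfl fun i _ => ?_
    have hmemDi : α i ∈ D := (hmemD _).mpr (by
      have : α i ∈ {β | β ∈ L} := by rw [hset]; exact Set.mem_range_self i
      exact this)
    rw [AdjAux.count_flatMap_of_mem need (α i) D (AdjAux.nodup_fdedup L) hmemDi, hneed]
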